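/- Let G be a C_3□P_2-free graph and let v_1,...,v_6 be six distinct vertices of G such that v_i and v_j are adjacent whenever 1 ≤ |i−j| ≤ 2 (a copy of P_6^2). Then at most 2 vertices of G outside {v_1,...,v_6} have exactly 4 neighbors in {v_1,...,v_6}. Moreover, if x and y are two distinct such vertices, then x and y are not adjacent, and the unordered pair of their neighbor sets in {v_1,...,v_6} is one of: { {v_1,v_2,v_3,v_4}, {v_1,v_3,v_5,v_6} }, { {v_3,v_4,v_5,v_6}, {v_1,v_2,v_4,v_6} }, or { {v_1,v_2,v_3,v_4}, {v_3,v_4,v_5,v_6} }. -/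
import Mathlib

open SimpleGraph

/-- `CopyIn H G` means `G` contains a subgraph isomorphic to `H`,
i.e. there is an injective graph homomorphism from `H` to `G`. -/
def CopyIn {α β : Type*} (H : SimpleGraph α) (G : SimpleGraph β) : Prop :=
  ∃ f : α ↪ β, ∀ a b, H.Adj a b → G.Adj (f a) (f b)

/-- The Turán number `ex(n, H)`: the maximum number of edges in an
`H`-free graph on `n` vertices. -/
noncomputable def exNum {α : Type*} (n : ℕ) (H : SimpleGraph α) : ℕ :=
  sSup {m : ℕ | ∃ G : SimpleGraph (Fin n), ¬ CopyIn H G ∧ G.edgeSet.ncard = m}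

/-- The odd prism `C_{2k+1} □ P_2`. -/
def oddPrism (k : ℕ) : SimpleGraph (Fin (2 * k + 1) × Fin 2) :=
  cycleGraph (2 * k + 1) □ pathGraph 2

/-- `P_6^2`, the square of the path on six vertices: `i` and `j` are adjacent
iff `1 ≤ |i - j| ≤ 2`. -/
def pathSq6 : SimpleGraph (Fin 6) :=
  SimpleGraph.fromRel (fun i j => (i : ℕ) < (j : ℕ) ∧ (j : ℕ) ≤ (i : ℕ) + 2)

instance : DecidableRel pathSq6.Adj :=
  fun i j => decidable_of_iff _ (SimpleGraph.fromRel_adj _ i j).symm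

set_option linter.unusedTactic false in
set_option linter.unreachableTactic false in
lemma prism_of {V : Type*} {G : SimpleGraph V} {a0 a1 a2 b0 b1 b2 : V}
    (d01 : a0 ≠ a1) (d02 : a0 ≠ a2) (d12 : a1 ≠ a2)
    (e01 : b0 ≠ b1) (e02 : b0 ≠ b2) (e12 : b1 ≠ b2)
    (m00 : a0 ≠ b0) (m01 : a0 ≠ b1) (m02 : a0 ≠ b2)
    (m10 : a1 ≠ b0) (m11 : a1 ≠ b1) (m12 : a1 ≠ b2)
    (m20 : a2 ≠ b0) (m21 : a2 ≠ b1) (m22 : a2 ≠ b2)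
    (ha01 : G.Adj a0 a1) (ha02 : G.Adj a0 a2) (ha12 : G.Adj a1 a2)
    (hb01 : G.Adj b0 b1) (hb02 : G.Adj b0 b2) (hb12 : G.Adj b1 b2)
    (hm0 : G.Adj a0 b0) (hm1 : G.Adj a1 b1) (hm2 : G.Adj a2 b2) :
    CopyIn (oddPrism 1) G := by
  refine ⟨⟨fun p => ![![a0, b0], ![a1, b1], ![a2, b2]] p.1 p.2, ?_⟩, ?_⟩
  · intro p q h
    fin_cases p <;> fin_cases q <;> simp_all
  · intro a b hab
    have h : (cycleGraph 3).Adj a.1 b.1 ∧ a.2 = b.2 ∨ (pathGraph 2).Adj a.2 b.2 ∧ a.1 = b.1 := by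
      simpa [oddPrism, boxProd_adj] using hab
    fin_cases a <;> fin_cases b <;>
      simp_all [cycleGraph_adj, pathGraph_adj, Fin.ext_iff] <;>
      first | exact ha01.symm | exact ha02.symm | exact ha12.symm | exact hb01.symm
            | exact hb02.symm | exact hb12.symm | exact hm0.symm | exact hm1.symm
            | exact hm2.symm | omega

lemma adj_of_eq {V : Type*} {G : SimpleGraph V} {x : V} {v : Fin 6 ↪ V} {S : Set (Fin 6)}
    (h : {i | G.Adj x (v i)} = S) {i : Fin 6} (hi : i ∈ S) : G.Adj x (v i) := by
  rw [← h] at hi; exact hi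

lemma four_subsets (S : Set (Fin 6)) (h : S.ncard = 4) :
    S = {0,1,2,3} ∨ S = {0,1,2,4} ∨ S = {0,1,2,5} ∨ S = {0,1,3,4} ∨ S = {0,1,3,5} ∨
    S = {0,1,4,5} ∨ S = {0,2,3,4} ∨ S = {0,2,3,5} ∨ S = {0,2,4,5} ∨ S = {0,3,4,5} ∨
    S = {1,2,3,4} ∨ S = {1,2,3,5} ∨ S = {1,2,4,5} ∨ S = {1,3,4,5} ∨ S = {2,3,4,5} := by
  classical
  have hfin : S.Finite := Set.toFinite S
  have hT : hfin.toFinset.card = 4 := by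
    rw [Set.ncard_eq_toFinset_card S hfin] at h; exact h
  have key : ∀ T : Finset (Fin 6), T.card = 4 →
      T = {0,1,2,3} ∨ T = {0,1,2,4} ∨ T = {0,1,2,5} ∨ T = {0,1,3,4} ∨ T = {0,1,3,5} ∨
      T = {0,1,4,5} ∨ T = {0,2,3,4} ∨ T = {0,2,3,5} ∨ T = {0,2,4,5} ∨ T = {0,3,4,5} ∨
      T = {1,2,3,4} ∨ T = {1,2,3,5} ∨ T = {1,2,4,5} ∨ T = {1,3,4,5} ∨ T = {2,3,4,5} := by
    decide
  have hS : S = ↑hfin.toFinset := hfin.coe_toFinset.symm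
  rcases key _ hT with h'|h'|h'|h'|h'|h'|h'|h'|h'|h'|h'|h'|h'|h'|h' <;>
    rw [h'] at hS <;>
    simp only [Finset.coe_insert, Finset.coe_singleton] at hS <;> tauto

lemma prism1 {V : Type*} {G : SimpleGraph V} (hfree : ¬ CopyIn (oddPrism 1) G)
    (v : Fin 6 ↪ V) (hv : ∀ i j, pathSq6.Adj i j → G.Adj (v i) (v j))
    (x : V) (hx : x ∉ Set.range v) (a b c d e : Fin 6)
    (n1 : a ≠ b) (n2 : a ≠ c) (n3 : a ≠ d) (n4 : a ≠ e) (n5 : b ≠ c) (n6 : b ≠ d)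
    (n7 : b ≠ e) (n8 : c ≠ d) (n9 : c ≠ e) (n10 : d ≠ e)
    (e1 : pathSq6.Adj a b) (e2 : pathSq6.Adj c d) (e3 : pathSq6.Adj c e)
    (e4 : pathSq6.Adj d e) (e5 : pathSq6.Adj a d) (e6 : pathSq6.Adj b e)
    (x1 : G.Adj x (v a)) (x2 : G.Adj x (v b)) (x3 : G.Adj x (v c)) : False := by
  have hxv : ∀ i, x ≠ v i := fun i h => hx ⟨i, h.symm⟩
  have hne : ∀ {i j : Fin 6}, i ≠ j → v i ≠ v j := fun h hh => h (v.injective hh)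
  exact hfree (prism_of (hxv a) (hxv b) (hne n1) (hne n8) (hne n9) (hne n10)
    (hxv c) (hxv d) (hxv e) (hne n2) (hne n3) (hne n4) (hne n5) (hne n6) (hne n7)
    x1 x2 (hv a b e1) (hv c d e2) (hv c e e3) (hv d e e4)
    x3 (hv a d e5) (hv b e e6))

lemma prism2 {V : Type*} {G : SimpleGraph V} (hfree : ¬ CopyIn (oddPrism 1) G)
    (v : Fin 6 ↪ V) (hv : ∀ i j, pathSq6.Adj i j → G.Adj (v i) (v j))
    (x y : V) (hx : x ∉ Set.range v) (hy : y ∉ Set.range v) (hxy : x ≠ y)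
    (a b c d : Fin 6)
    (n1 : a ≠ b) (n2 : a ≠ c) (n3 : a ≠ d) (n4 : b ≠ c) (n5 : b ≠ d) (n6 : c ≠ d)
    (eab : pathSq6.Adj a b) (ecd : pathSq6.Adj c d) (ebd : pathSq6.Adj b d)
    (xa : G.Adj x (v a)) (xb : G.Adj x (v b)) (xc : G.Adj x (v c))
    (yc : G.Adj y (v c)) (yd : G.Adj y (v d)) (ya : G.Adj y (v a)) : False := by
  have hxv : ∀ i, x ≠ v i := fun i h => hx ⟨i, h.symm⟩
  have hyv : ∀ i, y ≠ v i := fun i h => hy ⟨i, h.symm⟩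
  have hne : ∀ {i j : Fin 6}, i ≠ j → v i ≠ v j := fun h hh => h (v.injective hh)
  exact hfree (prism_of (hxv a) (hxv b) (hne n1)
    ((hyv c).symm) (hne n6) (hyv d)
    (hxv c) hxy (hxv d)
    (hne n2) ((hyv a).symm) (hne n3)
    (hne n4) ((hyv b).symm) (hne n5)
    xa xb (hv a b eab)
    yc.symm (hv c d ecd) yd
    xc ya.symm (hv b d ebd))

lemma prism_adj {V : Type*} {G : SimpleGraph V} (hfree : ¬ CopyIn (oddPrism 1) G)
    (v : Fin 6 ↪ V) (hv : ∀ i j, pathSq6.Adj i j → G.Adj (v i) (v j))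
    (x y : V) (hx : x ∉ Set.range v) (hy : y ∉ Set.range v) (hadj : G.Adj x y)
    (a b c d : Fin 6)
    (n1 : a ≠ b) (n2 : a ≠ c) (n3 : a ≠ d) (n4 : b ≠ c) (n5 : b ≠ d) (n6 : c ≠ d)
    (eab : pathSq6.Adj a b) (ecd : pathSq6.Adj c d) (eac : pathSq6.Adj a c)
    (ebd : pathSq6.Adj b d)
    (xa : G.Adj x (v a)) (xb : G.Adj x (v b))
    (yc : G.Adj y (v c)) (yd : G.Adj y (v d)) : False := by
  have hxv : ∀ i, x ≠ v i := fun i h => hx ⟨i, h.symm⟩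
  have hyv : ∀ i, y ≠ v i := fun i h => hy ⟨i, h.symm⟩
  have hne : ∀ {i j : Fin 6}, i ≠ j → v i ≠ v j := fun h hh => h (v.injective hh)
  exact hfree (prism_of (hxv a) (hxv b) (hne n1)
    (hyv c) (hyv d) (hne n6)
    hadj.ne (hxv c) (hxv d)
    ((hyv a).symm) (hne n2) (hne n3)
    ((hyv b).symm) (hne n4) (hne n5)
    xa xb (hv a b eab)
    yc yd (hv c d ecd)
    hadj (hv a c eac) (hv b d ebd))

lemma classify {V : Type*} {G : SimpleGraph V} (hfree : ¬ CopyIn (oddPrism 1) G)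
    (v : Fin 6 ↪ V) (hv : ∀ i j, pathSq6.Adj i j → G.Adj (v i) (v j))
    (x : V) (hx : x ∉ Set.range v) (h4 : {i : Fin 6 | G.Adj x (v i)}.ncard = 4) :
    {i : Fin 6 | G.Adj x (v i)} = {0, 1, 2, 3} ∨ {i : Fin 6 | G.Adj x (v i)} = {2, 3, 4, 5} ∨
    {i : Fin 6 | G.Adj x (v i)} = {0, 2, 4, 5} ∨ {i : Fin 6 | G.Adj x (v i)} = {0, 1, 3, 5} ∨
    {i : Fin 6 | G.Adj x (v i)} = {1, 2, 3, 4} ∨ {i : Fin 6 | G.Adj x (v i)} = {0, 2, 3, 5} := by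
  rcases four_subsets _ h4 with h|h|h|h|h|h|h|h|h|h|h|h|h|h|h
  · exact Or.inl h
  · exact (prism1 hfree v hv x hx 0 1 4 2 3 (by decide) (by decide) (by decide) (by decide) (by decide) (by decide) (by decide) (by decide) (by decide) (by decide) (by decide) (by decide) (by decide) (by decide) (by decide) (by decide) (adj_of_eq h (by simp)) (adj_of_eq h (by simp)) (adj_of_eq h (by simp))).elim
  · exact (prism1 hfree v hv x hx 1 2 5 3 4 (by decide) (by decide) (by decide) (by decide) (by decide) (by decide) (by decide) (by decide) (by decide) (by decide) (by decide) (by decide) (by decide) (by decide) (by decide) (by decide) (adj_of_eq h (by simp)) (adj_of_eq h (by simp)) (adj_of_eq h (by simp))).elim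
  · exact (prism1 hfree v hv x hx 0 1 4 2 3 (by decide) (by decide) (by decide) (by decide) (by decide) (by decide) (by decide) (by decide) (by decide) (by decide) (by decide) (by decide) (by decide) (by decide) (by decide) (by decide) (adj_of_eq h (by simp)) (adj_of_eq h (by simp)) (adj_of_eq h (by simp))).elim
  · exact Or.inr (Or.inr (Or.inr (Or.inl h)))
  · exact (prism1 hfree v hv x hx 0 1 4 2 3 (by decide) (by decide) (by decide) (by decide) (by decide) (by decide) (by decide) (by decide) (by decide) (by decide) (by decide) (by decide) (by decide) (by decide) (by decide) (by decide) (adj_of_eq h (by simp)) (adj_of_eq h (by simp)) (adj_of_eq h (by simp))).elim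
  · exact (prism1 hfree v hv x hx 3 4 0 1 2 (by decide) (by decide) (by decide) (by decide) (by decide) (by decide) (by decide) (by decide) (by decide) (by decide) (by decide) (by decide) (by decide) (by decide) (by decide) (by decide) (adj_of_eq h (by simp)) (adj_of_eq h (by simp)) (adj_of_eq h (by simp))).elim
  · exact Or.inr (Or.inr (Or.inr (Or.inr (Or.inr h))))
  · exact Or.inr (Or.inr (Or.inl h))
  · exact (prism1 hfree v hv x hx 3 4 0 1 2 (by decide) (by decide) (by decide) (by decide) (by decide) (by decide) (by decide) (by decide) (by decide) (by decide) (by decide) (by decide) (by decide) (by decide) (by decide) (by decide) (adj_of_eq h (by simp)) (adj_of_eq h (by simp)) (adj_of_eq h (by simp))).elim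
  · exact Or.inr (Or.inr (Or.inr (Or.inr (Or.inl h))))
  · exact (prism1 hfree v hv x hx 1 2 5 3 4 (by decide) (by decide) (by decide) (by decide) (by decide) (by decide) (by decide) (by decide) (by decide) (by decide) (by decide) (by decide) (by decide) (by decide) (by decide) (by decide) (adj_of_eq h (by simp)) (adj_of_eq h (by simp)) (adj_of_eq h (by simp))).elim
  · exact (prism1 hfree v hv x hx 4 5 1 2 3 (by decide) (by decide) (by decide) (by decide) (by decide) (by decide) (by decide) (by decide) (by decide) (by decide) (by decide) (by decide) (by decide) (by decide) (by decide) (by decide) (adj_of_eq h (by simp)) (adj_of_eq h (by simp)) (adj_of_eq h (by simp))).elim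
  · exact (prism1 hfree v hv x hx 4 5 1 2 3 (by decide) (by decide) (by decide) (by decide) (by decide) (by decide) (by decide) (by decide) (by decide) (by decide) (by decide) (by decide) (by decide) (by decide) (by decide) (by decide) (adj_of_eq h (by simp)) (adj_of_eq h (by simp)) (adj_of_eq h (by simp))).elim
  · exact Or.inr (Or.inl h)

lemma keyPair {V : Type*} {G : SimpleGraph V} (hfree : ¬ CopyIn (oddPrism 1) G)
    (v : Fin 6 ↪ V) (hv : ∀ i j, pathSq6.Adj i j → G.Adj (v i) (v j)) :
    ∀ x y, x ≠ y →
      x ∉ Set.range v → {i : Fin 6 | G.Adj x (v i)}.ncard = 4 →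
      y ∉ Set.range v → {i : Fin 6 | G.Adj y (v i)}.ncard = 4 →
      ¬ G.Adj x y ∧
      (({{i : Fin 6 | G.Adj x (v i)}, {i : Fin 6 | G.Adj y (v i)}} : Set (Set (Fin 6)))
            = {{0, 1, 2, 3}, {0, 2, 4, 5}} ∨
        ({{i : Fin 6 | G.Adj x (v i)}, {i : Fin 6 | G.Adj y (v i)}} : Set (Set (Fin 6)))
            = {{2, 3, 4, 5}, {0, 1, 3, 5}} ∨
        ({{i : Fin 6 | G.Adj x (v i)}, {i : Fin 6 | G.Adj y (v i)}} : Set (Set (Fin 6)))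
            = {{0, 1, 2, 3}, {2, 3, 4, 5}}) := by
  intro x y hxy hx h4x hy h4y
  rcases classify hfree v hv x hx h4x with h1|h1|h1|h1|h1|h1 <;>
    rcases classify hfree v hv y hy h4y with h2|h2|h2|h2|h2|h2
  · exact (prism2 hfree v hv x y hx hy hxy 0 1 2 3 (by decide) (by decide) (by decide) (by decide) (by decide) (by decide) (by decide) (by decide) (by decide) (adj_of_eq h1 (by simp)) (adj_of_eq h1 (by simp)) (adj_of_eq h1 (by simp)) (adj_of_eq h2 (by simp)) (adj_of_eq h2 (by simp)) (adj_of_eq h2 (by simp))).elim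
  · exact ⟨fun hadj => (prism_adj hfree v hv x y hx hy hadj 1 2 3 4 (by decide) (by decide) (by decide) (by decide) (by decide) (by decide) (by decide) (by decide) (by decide) (by decide) (adj_of_eq h1 (by simp)) (adj_of_eq h1 (by simp)) (adj_of_eq h2 (by simp)) (adj_of_eq h2 (by simp))).elim, Or.inr (Or.inr (by rw [h1, h2]))⟩
  · exact ⟨fun hadj => (prism_adj hfree v hv x y hx hy hadj 1 3 0 2 (by decide) (by decide) (by decide) (by decide) (by decide) (by decide) (by decide) (by decide) (by decide) (by decide) (adj_of_eq h1 (by simp)) (adj_of_eq h1 (by simp)) (adj_of_eq h2 (by simp)) (adj_of_eq h2 (by simp))).elim, Or.inl (by rw [h1, h2])⟩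
  · exact (prism2 hfree v hv x y hx hy hxy 0 2 1 3 (by decide) (by decide) (by decide) (by decide) (by decide) (by decide) (by decide) (by decide) (by decide) (adj_of_eq h1 (by simp)) (adj_of_eq h1 (by simp)) (adj_of_eq h1 (by simp)) (adj_of_eq h2 (by simp)) (adj_of_eq h2 (by simp)) (adj_of_eq h2 (by simp))).elim
  · exact (prism2 hfree v hv x y hx hy hxy 1 2 3 4 (by decide) (by decide) (by decide) (by decide) (by decide) (by decide) (by decide) (by decide) (by decide) (adj_of_eq h1 (by simp)) (adj_of_eq h1 (by simp)) (adj_of_eq h1 (by simp)) (adj_of_eq h2 (by simp)) (adj_of_eq h2 (by simp)) (adj_of_eq h2 (by simp))).elim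
  · exact (prism2 hfree v hv x y hx hy hxy 0 1 2 3 (by decide) (by decide) (by decide) (by decide) (by decide) (by decide) (by decide) (by decide) (by decide) (adj_of_eq h1 (by simp)) (adj_of_eq h1 (by simp)) (adj_of_eq h1 (by simp)) (adj_of_eq h2 (by simp)) (adj_of_eq h2 (by simp)) (adj_of_eq h2 (by simp))).elim
  · exact ⟨fun hadj => (prism_adj hfree v hv y x hy hx hadj.symm 1 2 3 4 (by decide) (by decide) (by decide) (by decide) (by decide) (by decide) (by decide) (by decide) (by decide) (by decide) (adj_of_eq h2 (by simp)) (adj_of_eq h2 (by simp)) (adj_of_eq h1 (by simp)) (adj_of_eq h1 (by simp))).elim, Or.inr (Or.inr (by rw [h1, h2]; exact Set.pair_comm _ _))⟩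
  · exact (prism2 hfree v hv x y hx hy hxy 5 4 3 2 (by decide) (by decide) (by decide) (by decide) (by decide) (by decide) (by decide) (by decide) (by decide) (adj_of_eq h1 (by simp)) (adj_of_eq h1 (by simp)) (adj_of_eq h1 (by simp)) (adj_of_eq h2 (by simp)) (adj_of_eq h2 (by simp)) (adj_of_eq h2 (by simp))).elim
  · exact (prism2 hfree v hv x y hx hy hxy 5 3 4 2 (by decide) (by decide) (by decide) (by decide) (by decide) (by decide) (by decide) (by decide) (by decide) (adj_of_eq h1 (by simp)) (adj_of_eq h1 (by simp)) (adj_of_eq h1 (by simp)) (adj_of_eq h2 (by simp)) (adj_of_eq h2 (by simp)) (adj_of_eq h2 (by simp))).elim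
  · exact ⟨fun hadj => (prism_adj hfree v hv x y hx hy hadj 4 2 5 3 (by decide) (by decide) (by decide) (by decide) (by decide) (by decide) (by decide) (by decide) (by decide) (by decide) (adj_of_eq h1 (by simp)) (adj_of_eq h1 (by simp)) (adj_of_eq h2 (by simp)) (adj_of_eq h2 (by simp))).elim, Or.inr (Or.inl (by rw [h1, h2]))⟩
  · exact (prism2 hfree v hv x y hx hy hxy 4 3 2 1 (by decide) (by decide) (by decide) (by decide) (by decide) (by decide) (by decide) (by decide) (by decide) (adj_of_eq h1 (by simp)) (adj_of_eq h1 (by simp)) (adj_of_eq h1 (by simp)) (adj_of_eq h2 (by simp)) (adj_of_eq h2 (by simp)) (adj_of_eq h2 (by simp))).elim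
  · exact (prism2 hfree v hv x y hx hy hxy 5 4 3 2 (by decide) (by decide) (by decide) (by decide) (by decide) (by decide) (by decide) (by decide) (by decide) (adj_of_eq h1 (by simp)) (adj_of_eq h1 (by simp)) (adj_of_eq h1 (by simp)) (adj_of_eq h2 (by simp)) (adj_of_eq h2 (by simp)) (adj_of_eq h2 (by simp))).elim
  · exact ⟨fun hadj => (prism_adj hfree v hv y x hy hx hadj.symm 1 3 0 2 (by decide) (by decide) (by decide) (by decide) (by decide) (by decide) (by decide) (by decide) (by decide) (by decide) (adj_of_eq h2 (by simp)) (adj_of_eq h2 (by simp)) (adj_of_eq h1 (by simp)) (adj_of_eq h1 (by simp))).elim, Or.inl (by rw [h1, h2]; exact Set.pair_comm _ _)⟩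
  · exact (prism2 hfree v hv y x hy hx hxy.symm 5 3 4 2 (by decide) (by decide) (by decide) (by decide) (by decide) (by decide) (by decide) (by decide) (by decide) (adj_of_eq h2 (by simp)) (adj_of_eq h2 (by simp)) (adj_of_eq h2 (by simp)) (adj_of_eq h1 (by simp)) (adj_of_eq h1 (by simp)) (adj_of_eq h1 (by simp))).elim
  · exact (prism2 hfree v hv x y hx hy hxy 5 4 0 2 (by decide) (by decide) (by decide) (by decide) (by decide) (by decide) (by decide) (by decide) (by decide) (adj_of_eq h1 (by simp)) (adj_of_eq h1 (by simp)) (adj_of_eq h1 (by simp)) (adj_of_eq h2 (by simp)) (adj_of_eq h2 (by simp)) (adj_of_eq h2 (by simp))).elim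
  · exact (prism2 hfree v hv x y hx hy hxy 0 2 5 3 (by decide) (by decide) (by decide) (by decide) (by decide) (by decide) (by decide) (by decide) (by decide) (adj_of_eq h1 (by simp)) (adj_of_eq h1 (by simp)) (adj_of_eq h1 (by simp)) (adj_of_eq h2 (by simp)) (adj_of_eq h2 (by simp)) (adj_of_eq h2 (by simp))).elim
  · exact (prism2 hfree v hv x y hx hy hxy 4 5 2 3 (by decide) (by decide) (by decide) (by decide) (by decide) (by decide) (by decide) (by decide) (by decide) (adj_of_eq h1 (by simp)) (adj_of_eq h1 (by simp)) (adj_of_eq h1 (by simp)) (adj_of_eq h2 (by simp)) (adj_of_eq h2 (by simp)) (adj_of_eq h2 (by simp))).elim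
  · exact (prism2 hfree v hv x y hx hy hxy 0 2 5 3 (by decide) (by decide) (by decide) (by decide) (by decide) (by decide) (by decide) (by decide) (by decide) (adj_of_eq h1 (by simp)) (adj_of_eq h1 (by simp)) (adj_of_eq h1 (by simp)) (adj_of_eq h2 (by simp)) (adj_of_eq h2 (by simp)) (adj_of_eq h2 (by simp))).elim
  · exact (prism2 hfree v hv y x hy hx hxy.symm 0 2 1 3 (by decide) (by decide) (by decide) (by decide) (by decide) (by decide) (by decide) (by decide) (by decide) (adj_of_eq h2 (by simp)) (adj_of_eq h2 (by simp)) (adj_of_eq h2 (by simp)) (adj_of_eq h1 (by simp)) (adj_of_eq h1 (by simp)) (adj_of_eq h1 (by simp))).elim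
  · exact ⟨fun hadj => (prism_adj hfree v hv y x hy hx hadj.symm 4 2 5 3 (by decide) (by decide) (by decide) (by decide) (by decide) (by decide) (by decide) (by decide) (by decide) (by decide) (adj_of_eq h2 (by simp)) (adj_of_eq h2 (by simp)) (adj_of_eq h1 (by simp)) (adj_of_eq h1 (by simp))).elim, Or.inr (Or.inl (by rw [h1, h2]; exact Set.pair_comm _ _))⟩
  · exact (prism2 hfree v hv y x hy hx hxy.symm 0 2 5 3 (by decide) (by decide) (by decide) (by decide) (by decide) (by decide) (by decide) (by decide) (by decide) (adj_of_eq h2 (by simp)) (adj_of_eq h2 (by simp)) (adj_of_eq h2 (by simp)) (adj_of_eq h1 (by simp)) (adj_of_eq h1 (by simp)) (adj_of_eq h1 (by simp))).elim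
  · exact (prism2 hfree v hv x y hx hy hxy 0 1 5 3 (by decide) (by decide) (by decide) (by decide) (by decide) (by decide) (by decide) (by decide) (by decide) (adj_of_eq h1 (by simp)) (adj_of_eq h1 (by simp)) (adj_of_eq h1 (by simp)) (adj_of_eq h2 (by simp)) (adj_of_eq h2 (by simp)) (adj_of_eq h2 (by simp))).elim
  · exact (prism2 hfree v hv x y hx hy hxy 1 0 3 2 (by decide) (by decide) (by decide) (by decide) (by decide) (by decide) (by decide) (by decide) (by decide) (adj_of_eq h1 (by simp)) (adj_of_eq h1 (by simp)) (adj_of_eq h1 (by simp)) (adj_of_eq h2 (by simp)) (adj_of_eq h2 (by simp)) (adj_of_eq h2 (by simp))).elim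
  · exact (prism2 hfree v hv x y hx hy hxy 5 3 0 2 (by decide) (by decide) (by decide) (by decide) (by decide) (by decide) (by decide) (by decide) (by decide) (adj_of_eq h1 (by simp)) (adj_of_eq h1 (by simp)) (adj_of_eq h1 (by simp)) (adj_of_eq h2 (by simp)) (adj_of_eq h2 (by simp)) (adj_of_eq h2 (by simp))).elim
  · exact (prism2 hfree v hv y x hy hx hxy.symm 1 2 3 4 (by decide) (by decide) (by decide) (by decide) (by decide) (by decide) (by decide) (by decide) (by decide) (adj_of_eq h2 (by simp)) (adj_of_eq h2 (by simp)) (adj_of_eq h2 (by simp)) (adj_of_eq h1 (by simp)) (adj_of_eq h1 (by simp)) (adj_of_eq h1 (by simp))).elim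
  · exact (prism2 hfree v hv y x hy hx hxy.symm 4 3 2 1 (by decide) (by decide) (by decide) (by decide) (by decide) (by decide) (by decide) (by decide) (by decide) (adj_of_eq h2 (by simp)) (adj_of_eq h2 (by simp)) (adj_of_eq h2 (by simp)) (adj_of_eq h1 (by simp)) (adj_of_eq h1 (by simp)) (adj_of_eq h1 (by simp))).elim
  · exact (prism2 hfree v hv y x hy hx hxy.symm 4 5 2 3 (by decide) (by decide) (by decide) (by decide) (by decide) (by decide) (by decide) (by decide) (by decide) (adj_of_eq h2 (by simp)) (adj_of_eq h2 (by simp)) (adj_of_eq h2 (by simp)) (adj_of_eq h1 (by simp)) (adj_of_eq h1 (by simp)) (adj_of_eq h1 (by simp))).elim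
  · exact (prism2 hfree v hv y x hy hx hxy.symm 1 0 3 2 (by decide) (by decide) (by decide) (by decide) (by decide) (by decide) (by decide) (by decide) (by decide) (adj_of_eq h2 (by simp)) (adj_of_eq h2 (by simp)) (adj_of_eq h2 (by simp)) (adj_of_eq h1 (by simp)) (adj_of_eq h1 (by simp)) (adj_of_eq h1 (by simp))).elim
  · exact (prism2 hfree v hv x y hx hy hxy 1 2 3 4 (by decide) (by decide) (by decide) (by decide) (by decide) (by decide) (by decide) (by decide) (by decide) (adj_of_eq h1 (by simp)) (adj_of_eq h1 (by simp)) (adj_of_eq h1 (by simp)) (adj_of_eq h2 (by simp)) (adj_of_eq h2 (by simp)) (adj_of_eq h2 (by simp))).elim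
  · exact (prism2 hfree v hv x y hx hy hxy 2 4 3 5 (by decide) (by decide) (by decide) (by decide) (by decide) (by decide) (by decide) (by decide) (by decide) (adj_of_eq h1 (by simp)) (adj_of_eq h1 (by simp)) (adj_of_eq h1 (by simp)) (adj_of_eq h2 (by simp)) (adj_of_eq h2 (by simp)) (adj_of_eq h2 (by simp))).elim
  · exact (prism2 hfree v hv y x hy hx hxy.symm 0 1 2 3 (by decide) (by decide) (by decide) (by decide) (by decide) (by decide) (by decide) (by decide) (by decide) (adj_of_eq h2 (by simp)) (adj_of_eq h2 (by simp)) (adj_of_eq h2 (by simp)) (adj_of_eq h1 (by simp)) (adj_of_eq h1 (by simp)) (adj_of_eq h1 (by simp))).elim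
  · exact (prism2 hfree v hv y x hy hx hxy.symm 5 4 3 2 (by decide) (by decide) (by decide) (by decide) (by decide) (by decide) (by decide) (by decide) (by decide) (adj_of_eq h2 (by simp)) (adj_of_eq h2 (by simp)) (adj_of_eq h2 (by simp)) (adj_of_eq h1 (by simp)) (adj_of_eq h1 (by simp)) (adj_of_eq h1 (by simp))).elim
  · exact (prism2 hfree v hv y x hy hx hxy.symm 0 2 5 3 (by decide) (by decide) (by decide) (by decide) (by decide) (by decide) (by decide) (by decide) (by decide) (adj_of_eq h2 (by simp)) (adj_of_eq h2 (by simp)) (adj_of_eq h2 (by simp)) (adj_of_eq h1 (by simp)) (adj_of_eq h1 (by simp)) (adj_of_eq h1 (by simp))).elim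
  · exact (prism2 hfree v hv y x hy hx hxy.symm 5 3 0 2 (by decide) (by decide) (by decide) (by decide) (by decide) (by decide) (by decide) (by decide) (by decide) (adj_of_eq h2 (by simp)) (adj_of_eq h2 (by simp)) (adj_of_eq h2 (by simp)) (adj_of_eq h1 (by simp)) (adj_of_eq h1 (by simp)) (adj_of_eq h1 (by simp))).elim
  · exact (prism2 hfree v hv y x hy hx hxy.symm 2 4 3 5 (by decide) (by decide) (by decide) (by decide) (by decide) (by decide) (by decide) (by decide) (by decide) (adj_of_eq h2 (by simp)) (adj_of_eq h2 (by simp)) (adj_of_eq h2 (by simp)) (adj_of_eq h1 (by simp)) (adj_of_eq h1 (by simp)) (adj_of_eq h1 (by simp))).elim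
  · exact (prism2 hfree v hv x y hx hy hxy 5 3 0 2 (by decide) (by decide) (by decide) (by decide) (by decide) (by decide) (by decide) (by decide) (by decide) (adj_of_eq h1 (by simp)) (adj_of_eq h1 (by simp)) (adj_of_eq h1 (by simp)) (adj_of_eq h2 (by simp)) (adj_of_eq h2 (by simp)) (adj_of_eq h2 (by simp))).elim

lemma no_triangle {α : Type*} {A B C D : α} (hAB : A ≠ B) (hAC : A ≠ C) (hAD : A ≠ D)
    (hBC : B ≠ C) (hBD : B ≠ D) (hCD : C ≠ D) {P Q R : α}
    (h1 : ({P, Q} : Set α) = {A, C} ∨ ({P, Q} : Set α) = {B, D} ∨ ({P, Q} : Set α) = {A, B})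
    (h2 : ({P, R} : Set α) = {A, C} ∨ ({P, R} : Set α) = {B, D} ∨ ({P, R} : Set α) = {A, B})
    (h3 : ({Q, R} : Set α) = {A, C} ∨ ({Q, R} : Set α) = {B, D} ∨ ({Q, R} : Set α) = {A, B}) :
    False := by
  simp only [Set.pair_eq_pair_iff] at h1 h2 h3
  rcases h1 with ⟨e1, e2⟩|⟨e1, e2⟩|⟨e1, e2⟩|⟨e1, e2⟩|⟨e1, e2⟩|⟨e1, e2⟩ <;>
    rcases h2 with ⟨f1, f2⟩|⟨f1, f2⟩|⟨f1, f2⟩|⟨f1, f2⟩|⟨f1, f2⟩|⟨f1, f2⟩ <;>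
    rcases h3 with ⟨g1, g2⟩|⟨g1, g2⟩|⟨g1, g2⟩|⟨g1, g2⟩|⟨g1, g2⟩|⟨g1, g2⟩ <;>
    simp_all

theorem at_most_two_degree_four_vertices {V : Type*} (G : SimpleGraph V)
    (hfree : ¬ CopyIn (oddPrism 1) G)
    (v : Fin 6 ↪ V) (hv : ∀ i j, pathSq6.Adj i j → G.Adj (v i) (v j)) :
    {w | w ∉ Set.range v ∧ {i : Fin 6 | G.Adj w (v i)}.ncard = 4}.encard ≤ 2 ∧
    ∀ x y, x ≠ y →
      x ∉ Set.range v → {i : Fin 6 | G.Adj x (v i)}.ncard = 4 →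
      y ∉ Set.range v → {i : Fin 6 | G.Adj y (v i)}.ncard = 4 →
      ¬ G.Adj x y ∧
      (({{i : Fin 6 | G.Adj x (v i)}, {i : Fin 6 | G.Adj y (v i)}} : Set (Set (Fin 6)))
            = {{0, 1, 2, 3}, {0, 2, 4, 5}} ∨
        ({{i : Fin 6 | G.Adj x (v i)}, {i : Fin 6 | G.Adj y (v i)}} : Set (Set (Fin 6)))
            = {{2, 3, 4, 5}, {0, 1, 3, 5}} ∨
        ({{i : Fin 6 | G.Adj x (v i)}, {i : Fin 6 | G.Adj y (v i)}} : Set (Set (Fin 6)))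
            = {{0, 1, 2, 3}, {2, 3, 4, 5}}) := by
  have key := keyPair hfree v hv
  refine ⟨?_, key⟩
  set W := {w | w ∉ Set.range v ∧ {i : Fin 6 | G.Adj w (v i)}.ncard = 4} with hW
  by_contra h23
  have h2lt : (2 : ℕ∞) < W.encard := not_le.1 h23
  obtain ⟨a, b, ha, hb, hab⟩ := Set.one_lt_encard_iff.1 (lt_trans (by norm_num : (1 : ℕ∞) < 2) h2lt)
  by_cases hc : ∃ c ∈ W, c ≠ a ∧ c ≠ b
  · obtain ⟨c, hcW, hca, hcb⟩ := hc
    have k1 := (key a b hab ha.1 ha.2 hb.1 hb.2).2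
    have k2 := (key a c hca.symm ha.1 ha.2 hcW.1 hcW.2).2
    have k3 := (key b c hcb.symm hb.1 hb.2 hcW.1 hcW.2).2
    have hAB : ({0, 1, 2, 3} : Set (Fin 6)) ≠ {2, 3, 4, 5} := by
      intro h; have := h ▸ (show (0 : Fin 6) ∈ ({0, 1, 2, 3} : Set (Fin 6)) by simp)
      simp at this
    have hAC : ({0, 1, 2, 3} : Set (Fin 6)) ≠ {0, 2, 4, 5} := by
      intro h; have := h ▸ (show (1 : Fin 6) ∈ ({0, 1, 2, 3} : Set (Fin 6)) by simp)
      simp at this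
    have hAD : ({0, 1, 2, 3} : Set (Fin 6)) ≠ {0, 1, 3, 5} := by
      intro h; have := h ▸ (show (2 : Fin 6) ∈ ({0, 1, 2, 3} : Set (Fin 6)) by simp)
      simp at this
    have hBC : ({2, 3, 4, 5} : Set (Fin 6)) ≠ {0, 2, 4, 5} := by
      intro h; have := h ▸ (show (3 : Fin 6) ∈ ({2, 3, 4, 5} : Set (Fin 6)) by simp)
      simp at this
    have hBD : ({2, 3, 4, 5} : Set (Fin 6)) ≠ {0, 1, 3, 5} := by
      intro h; have := h ▸ (show (2 : Fin 6) ∈ ({2, 3, 4, 5} : Set (Fin 6)) by simp)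
      simp at this
    have hCD : ({0, 2, 4, 5} : Set (Fin 6)) ≠ {0, 1, 3, 5} := by
      intro h; have := h ▸ (show (2 : Fin 6) ∈ ({0, 2, 4, 5} : Set (Fin 6)) by simp)
      simp at this
    exact no_triangle hAB hAC hAD hBC hBD hCD k1 k2 k3
  · push_neg at hc
    have hsub : W ⊆ {a, b} := by
      intro w hw
      by_cases hwa : w = a
      · exact Or.inl hwa
      · exact Or.inr (hc w hw hwa)
    exact h23 (le_trans (Set.encard_mono hsub) (le_of_eq (Set.encard_pair hab)))
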